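/- There exists a customer attraction game with exactly three agents whose weights are (w, 1, 1) for some integer w ≥ 2, in which all nodes have value 1 and all three agents share one common strategy space (𝒮_1 = 𝒮_2 = 𝒮_3), that has no pure Nash equilibrium. -/

import Mathlib

open Finset

/-- A customer attraction game: nodes `N` with integer values `≥ 1`, agents `A`
with integer weights `≥ 1`, and a nonempty finite strategy space (a finite set of
subsets of `N`) for each agent. -/
structure CAG (N A : Type*) [Fintype N] [Fintype A] where
  v : N → ℕ
  v_pos : ∀ j, 1 ≤ v j
  w : A → ℕ
  w_pos : ∀ i, 1 ≤ w i
  strat : A → Finset (Finset N)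
  strat_ne : ∀ i, (strat i).Nonempty

variable {N A : Type*} [Fintype N] [Fintype A] [DecidableEq N]

/-- The load `c(j,S)` of node `j`: total weight of agents attracting `j`. -/
def CAG.load (G : CAG N A) (S : A → Finset N) (j : N) : ℕ :=
  ∑ i : A, if j ∈ S i then G.w i else 0

/-- The utility `U_i(S) = ∑_{j ∈ S_i} v_j · w_i / c(j,S)`. -/
noncomputable def CAG.util (G : CAG N A) (S : A → Finset N) (i : A) : ℝ :=
  ∑ j ∈ S i, (G.v j : ℝ) * (G.w i : ℝ) / (G.load S j : ℝ)

/-- A strategy profile: each agent plays a strategy from her strategy space. -/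
def CAG.valid (G : CAG N A) (S : A → Finset N) : Prop :=
  ∀ i, S i ∈ G.strat i

/-- Pure Nash equilibrium. -/
def CAG.PNE [DecidableEq A] (G : CAG N A) (S : A → Finset N) : Prop :=
  G.valid S ∧ ∀ i, ∀ S' ∈ G.strat i, G.util (Function.update S i S') i ≤ G.util S i

/-- Social welfare. -/
noncomputable def CAG.sw (G : CAG N A) (S : A → Finset N) : ℝ :=
  ∑ i : A, G.util S i

/-- The harmonic number `H_c = ∑_{k=1}^{c} 1/k`. -/
noncomputable def harm (c : ℕ) : ℝ := ∑ k ∈ Finset.range c, (1 : ℝ) / (k + 1)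

/-- Rosenthal-type potential `Φ(S) = ∑_j v_j ∑_{k=1}^{c(j,S)} 1/k`. -/
noncomputable def CAG.pot (G : CAG N A) (S : A → Finset N) : ℝ :=
  ∑ j : N, (G.v j : ℝ) * harm (G.load S j)


namespace NoPNE

def A0 : Finset (Fin 59) := {0,1,2,3,7,8,9,10,11,12,13,15,26,27,28,29,32,35,36,46,47,48,49,50,51,52,54,55,56}
def A1 : Finset (Fin 59) := {4,5,6,7,8,9,10,11,12,13,16,17,18,26,27,28,29,33,34,35,36,53,54,55,56,57,58}
def A2 : Finset (Fin 59) := {7,8,9,10,11,12,13,19,20,21,22,23,24,25,26,27,28,29,37,38,39,40,41,42,43,44,45,57,58}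
def A3 : Finset (Fin 59) := {14,15,16,17,18,19,20,21,22,23,24,25,26,27,28,29,46,47,48,49,50,51,52,53,54,55,56,57,58}
def A4 : Finset (Fin 59) := {30,31,32,33,34,35,36,37,38,39,40,41,42,43,44,45,46,47,48,49,50,51,52,53,54,55,56,57,58}

def AA : Fin 5 → Finset (Fin 59) := ![A0, A1, A2, A3, A4]

def SS : Finset (Finset (Fin 59)) := {A0, A1, A2, A3, A4}

def G : CAG (Fin 59) (Fin 3) where
  v := fun _ => 1
  v_pos := fun _ => le_refl 1
  w := ![11, 1, 1]
  w_pos := by decide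
  strat := fun _ => SS
  strat_ne := fun _ => ⟨A0, Finset.mem_insert_self _ _⟩

def nutil (T : Fin 3 → Finset (Fin 59)) (i : Fin 3) : ℕ :=
  ∑ j ∈ T i, G.w i * (1716 / G.load T j)

set_option maxHeartbeats 4000000 in
theorem key : ∀ a b c : Fin 5, ∃ i : Fin 3, ∃ s : Fin 5,
    nutil ![AA a, AA b, AA c] i <
      nutil (Function.update ![AA a, AA b, AA c] i (AA s)) i := by decide

lemma load_eq (T : Fin 3 → Finset (Fin 59)) (j : Fin 59) :
    G.load T j = (if j ∈ T 0 then 11 else 0) + (if j ∈ T 1 then 1 else 0)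
      + (if j ∈ T 2 then 1 else 0) := by
  simp [CAG.load, Fin.sum_univ_three, G, add_assoc]

lemma load_dvd (T : Fin 3 → Finset (Fin 59)) (j : Fin 59) :
    G.load T j ∣ 1716 ∨ G.load T j = 0 := by
  rw [load_eq]
  split_ifs <;> norm_num

lemma load_pos (T : Fin 3 → Finset (Fin 59)) {i : Fin 3} {j : Fin 59} (h : j ∈ T i) :
    0 < G.load T j := by
  have h1 : 0 < (if j ∈ T i then G.w i else 0) := by
    simp only [h, if_true]
    exact G.w_pos i
  exact lt_of_lt_of_le h1
    (Finset.single_le_sum (f := fun k => if j ∈ T k then G.w k else 0)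
      (fun k _ => Nat.zero_le _) (Finset.mem_univ i))

lemma util_eq (T : Fin 3 → Finset (Fin 59)) (i : Fin 3) :
    G.util T i = (nutil T i : ℝ) / 1716 := by
  unfold CAG.util nutil
  rw [Nat.cast_sum, Finset.sum_div]
  refine Finset.sum_congr rfl fun j hj => ?_
  have hpos : 0 < G.load T j := load_pos T hj
  have hdvd : G.load T j ∣ 1716 := (load_dvd T j).resolve_right (by omega)
  have hne : (G.load T j : ℝ) ≠ 0 := Nat.cast_ne_zero.mpr (by omega)
  rw [Nat.cast_mul, Nat.cast_div hdvd hne]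
  have hv : G.v j = 1 := rfl
  rw [hv]
  push_cast
  field_simp

lemma mem_SS : ∀ s : Fin 5, AA s ∈ SS := by decide

lemma SS_elim : ∀ T ∈ SS, ∃ s : Fin 5, T = AA s := by
  intro T hT
  simp only [SS, Finset.mem_insert, Finset.mem_singleton] at hT
  rcases hT with h | h | h | h | h
  exacts [⟨0, h⟩, ⟨1, h⟩, ⟨2, h⟩, ⟨3, h⟩, ⟨4, h⟩]

theorem main : ¬ ∃ S : Fin 3 → Finset (Fin 59), G.PNE S := by
  rintro ⟨S, hval, hbest⟩
  obtain ⟨a, ha⟩ := SS_elim _ (hval 0)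
  obtain ⟨b, hb⟩ := SS_elim _ (hval 1)
  obtain ⟨c, hc⟩ := SS_elim _ (hval 2)
  have hS : S = ![AA a, AA b, AA c] := by
    funext k; fin_cases k
    · simpa using ha
    · simpa using hb
    · simpa using hc
  subst hS
  obtain ⟨i, s, hkey⟩ := key a b c
  have h := hbest i (AA s) (mem_SS s)
  rw [util_eq, util_eq] at h
  have h2 : (nutil (Function.update ![AA a, AA b, AA c] i (AA s)) i : ℝ)
      ≤ (nutil ![AA a, AA b, AA c] i : ℝ) := by linarith
  exact absurd (Nat.cast_le.mp h2) (not_le.mpr hkey)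

end NoPNE

/-- There exists a customer attraction game with exactly three agents
of weights `(w,1,1)` for some integer `w ≥ 2`, in which all nodes have value 1 and
all three agents share one common strategy space, that has no pure Nash
equilibrium. -/
theorem exists_weighted_symmetric_game_without_PNE :
    ∃ (n w : ℕ), 2 ≤ w ∧
      ∃ G : CAG (Fin n) (Fin 3),
        G.w = ![w, 1, 1] ∧
        (∀ j, G.v j = 1) ∧
        (∀ i i' : Fin 3, G.strat i = G.strat i') ∧
        ¬ ∃ S : Fin 3 → Finset (Fin n), G.PNE S := by
  exact ⟨59, 11, by norm_num, NoPNE.G, rfl, fun j => rfl, fun i i' => rfl, NoPNE.main⟩
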